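/- Let B be a real n×n stochastic matrix (all entries nonnegative and each column summing to 1) such that ‖Bx‖_1 = ‖x‖_1 for all x ∈ ℝ^n (not just for nonnegative x). Then B is a permutation matrix. -/
import Mathlib


/-- If `B` is a real `n×n` stochastic matrix (all entries nonnegative, each column
summing to `1`) that preserves the `1`-norm `‖x‖₁ = Σ_j |x_j|` of every real vector
(not just of nonnegative ones), then `B` is a permutation matrix. -/
theorem stochastic_one_norm_preserving_is_perm {n : ℕ} (B : Matrix (Fin n) (Fin n) ℝ)
    (hnonneg : ∀ j k, 0 ≤ B j k) (hcol : ∀ k, ∑ j, B j k = 1)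
    (hB : ∀ x : Fin n → ℝ, ∑ j, |B.mulVec x j| = ∑ j, |x j|) :
    ∃ σ : Equiv.Perm (Fin n), ∀ j k, B j k = if k = σ j then 1 else 0 := by
  -- Step 1: columns have pairwise disjoint supports.
  have hdisj : ∀ k l : Fin n, k ≠ l → ∀ j, B j k = 0 ∨ B j l = 0 := by
    intro k l hkl j
    set x : Fin n → ℝ := fun i => (if i = k then 1 else 0) - (if i = l then 1 else 0) with hx
    have hmul : ∀ j, B.mulVec x j = B j k - B j l := by
      intro j
      simp [Matrix.mulVec, dotProduct, hx, mul_sub, Finset.sum_sub_distrib,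
        mul_ite, mul_one, mul_zero]
    have hrhs : ∑ i, |x i|
        = ∑ i, ((if i = k then (1:ℝ) else 0) + (if i = l then 1 else 0)) := by
      apply Finset.sum_congr rfl
      intro i _
      by_cases h1 : i = k <;> by_cases h2 : i = l
      · exact absurd (h1 ▸ h2) hkl
      · simp [hx, h1, h2, hkl]
      · simp [hx, h1, h2, Ne.symm hkl]
      · simp [hx, h1, h2]
    have hsum : ∑ j, |B j k - B j l| = ∑ j, (B j k + B j l) := by
      have := hB x
      simp only [hmul] at this
      rw [this, hrhs, Finset.sum_add_distrib, Finset.sum_ite_eq' _ k, Finset.sum_ite_eq' _ l,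
        Finset.sum_add_distrib, hcol k, hcol l]
      simp
    have hle : ∀ j ∈ Finset.univ, |B j k - B j l| ≤ B j k + B j l := by
      intro j _
      rcases abs_cases (B j k - B j l) with ⟨h, _⟩ | ⟨h, _⟩ <;>
        · rw [h]; have := hnonneg j k; have := hnonneg j l; linarith
    have heq := (Finset.sum_eq_sum_iff_of_le hle).mp hsum j (Finset.mem_univ j)
    rcases abs_cases (B j k - B j l) with ⟨h, _⟩ | ⟨h, _⟩
    · right; rw [h] at heq; linarith
    · left; rw [h] at heq; linarith
  -- Step 2: each column has a positive entry.
  have hex : ∀ k, ∃ j, 0 < B j k := by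
    intro k
    by_contra h
    push_neg at h
    have : ∀ j, B j k = 0 := fun j => le_antisymm (h j) (hnonneg j k)
    have h1 := hcol k
    rw [Finset.sum_congr rfl (fun j _ => this j)] at h1
    simp at h1
  classical
  let f : Fin n → Fin n := fun k => (hex k).choose
  have hf : ∀ k, 0 < B (f k) k := fun k => (hex k).choose_spec
  have hinj : Function.Injective f := by
    intro k l h
    by_contra hkl
    rcases hdisj k l hkl (f k) with h0 | h0
    · exact absurd h0 (ne_of_gt (hf k))
    · rw [h] at h0; exact absurd h0 (ne_of_gt (hf l))
  have hbij : Function.Bijective f := Finite.injective_iff_bijective.mp hinj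
  let e : Equiv.Perm (Fin n) := Equiv.ofBijective f hbij
  -- off-diagonal entries vanish
  have hzero : ∀ j k, j ≠ f k → B j k = 0 := by
    intro j k hjk
    obtain ⟨l, hl⟩ := hbij.2 j
    have hlk : l ≠ k := by rintro rfl; exact hjk hl.symm
    rcases hdisj k l hlk.symm j with h0 | h0
    · exact h0
    · rw [← hl] at h0; exact absurd h0 (ne_of_gt (hf l))
  have hone : ∀ k, B (f k) k = 1 := by
    intro k
    have := hcol k
    rwa [Finset.sum_eq_single (f k) (fun j _ hj => hzero j k hj)
      (fun h => absurd (Finset.mem_univ _) h)] at this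
  refine ⟨e.symm, fun j k => ?_⟩
  by_cases h : k = e.symm j
  · have : f k = j := by
      rw [h]; exact e.apply_symm_apply j
    rw [if_pos h, ← this, hone]
  · rw [if_neg h]
    apply hzero
    intro hjk
    subst hjk
    exact h (((Equiv.ofBijective f hbij).symm_apply_apply k).symm)
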